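/- Suppose the set of saddle points X* x P* is nonempty, the infinite sequences generated by the inexact augmented Lagrangian method are well-defined, the error bound assumption holds with constants kappa > 0 and epsilon > 0, and liminf_{k -> infinity} c_k > 2 kappa (sigma + sqrt(sigma)). Then there exists a positive integer k1 such that for all k >= k1, dist(p^k, P*) <= rho_k * dist(p^{k-1}, P*), where rho_k = kappa sqrt(1 + sigma) / sqrt(c_k^2 - 2 kappa (sigma + sqrt(sigma)) c_k + kappa^2 (1 + sigma)). -/

import Mathlib

open scoped RealInnerProductSpace
open Filter

noncomputable section

/-- `Evec m` is `ℝ^m` with the Euclidean norm. -/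
abbrev Evec (m : ℕ) := EuclideanSpace ℝ (Fin m)

/-- View a plain function `Fin m → ℝ` as a Euclidean vector. -/
def toE {m : ℕ} (v : Fin m → ℝ) : Evec m := WithLp.toLp 2 v

/-- The dual space `ℝ^{m1} × ℝ^{m2}` with the Euclidean (ℓ²) product norm. -/
abbrev DualPair (m1 m2 : ℕ) := WithLp 2 (Evec m1 × Evec m2)

def mkDual {m1 m2 : ℕ} (lam : Evec m1) (mu : Evec m2) : DualPair m1 m2 := WithLp.toLp 2 (lam, mu)

/-- The primal-dual space `X × ℝ^{m1+m2}` with the Euclidean (ℓ²) product norm. -/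
abbrev Triple (X : Type*) [NormedAddCommGroup X] (m1 m2 : ℕ) :=
  WithLp 2 (X × DualPair m1 m2)

def asT {X : Type*} [NormedAddCommGroup X] {m1 m2 : ℕ}
    (q : X × DualPair m1 m2) : Triple X m1 m2 := WithLp.toLp 2 q

variable {X : Type*} [NormedAddCommGroup X] [InnerProductSpace ℝ X] [FiniteDimensional ℝ X]
variable {m1 m2 : ℕ}

/-- The Lagrangian `L(x, λ, μ) = f(x) + ⟨λ, h(x)⟩ + ⟨μ, g(x)⟩`. -/
def Lag (f : X → ℝ) (h : X → Evec m1) (g : X → Evec m2)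
    (x : X) (lam : Evec m1) (mu : Evec m2) : ℝ :=
  f x + ⟪lam, h x⟫ + ⟪mu, g x⟫

/-- `(y, u, v) ∈ ∂L(x, λ, μ)`: the saddle subdifferential of the Lagrangian (for `μ ≥ 0`). -/
def saddleSubdiff (f : X → ℝ) (h : X → Evec m1) (g : X → Evec m2)
    (x : X) (lam : Evec m1) (mu : Evec m2) (y : X) (u : Evec m1) (v : Evec m2) : Prop :=
  (∀ x' : X, Lag f h g x lam mu + ⟪y, x' - x⟫ ≤ Lag f h g x' lam mu) ∧
  (∀ (lam' : Evec m1) (mu' : Evec m2), (∀ i, 0 ≤ mu' i) →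
    Lag f h g x lam' mu' ≤ Lag f h g x lam mu - ⟪u, lam' - lam⟫ - ⟪v, mu' - mu⟫)

/-- The set of saddle points of the Lagrangian: points `(x, (λ, μ))` with `μ ≥ 0`
and `(0,0,0) ∈ ∂L(x, λ, μ)`. -/
def SaddlePoints (f : X → ℝ) (h : X → Evec m1) (g : X → Evec m2) :
    Set (X × DualPair m1 m2) :=
  {s | ∃ (x : X) (lam : Evec m1) (mu : Evec m2), s = (x, mkDual lam mu) ∧
    (∀ i, 0 ≤ mu i) ∧ saddleSubdiff f h g x lam mu 0 0 0}

/-- `X*`: the solution set of the primal problem (P). -/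
def PrimalOpt (f : X → ℝ) (h : X → Evec m1) (g : X → Evec m2) : Set X :=
  {x | h x = 0 ∧ (∀ i, g x i ≤ 0) ∧
    ∀ x' : X, h x' = 0 → (∀ i, g x' i ≤ 0) → f x ≤ f x'}

/-- The dual objective function `d(λ, μ) = inf_x L(x, λ, μ)`, valued in `EReal`. -/
def dualFun (f : X → ℝ) (h : X → Evec m1) (g : X → Evec m2)
    (lam : Evec m1) (mu : Evec m2) : EReal :=
  ⨅ x : X, ((Lag f h g x lam mu : ℝ) : EReal)

/-- `P*`: the solution set of the dual problem (D). -/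
def DualOpt (f : X → ℝ) (h : X → Evec m1) (g : X → Evec m2) : Set (DualPair m1 m2) :=
  {p | ∃ (lam : Evec m1) (mu : Evec m2), p = mkDual lam mu ∧ (∀ i, 0 ≤ mu i) ∧
    ∀ (lam' : Evec m1) (mu' : Evec m2), (∀ i, 0 ≤ mu' i) →
      dualFun f h g lam' mu' ≤ dualFun f h g lam mu}

/-- The augmented Lagrangian with penalty parameter `c`. -/
def AugLag (f : X → ℝ) (h : X → Evec m1) (g : X → Evec m2) (c : ℝ)
    (x : X) (lam : Evec m1) (mu : Evec m2) : ℝ :=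
  f x + ⟪lam, h x⟫ + (c / 2) * ‖h x‖ ^ 2 +
    (1 / (2 * c)) * (‖toE (fun i => max 0 (mu i + c * g x i))‖ ^ 2 - ‖mu‖ ^ 2)

/-- The inexact augmented Lagrangian method of Eckstein and Silva, with relative error
tolerance `σ ∈ [0,1)` and penalty parameters `c k` with `inf_k c k > 0`. -/
structure ALMSeq (f : X → ℝ) (h : X → Evec m1) (g : X → Evec m2)
    (σ : ℝ) (c : ℕ → ℝ) (x y w : ℕ → X)
    (lam : ℕ → Evec m1) (mu : ℕ → Evec m2) : Prop where
  sigma_nonneg : 0 ≤ σ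
  sigma_lt_one : σ < 1
  c_pos : ∀ k, 0 < c k
  c_inf : ∃ cmin > 0, ∀ k, cmin ≤ c k
  mu0_nonneg : ∀ i, 0 ≤ mu 0 i
  /-- `y k` is a subgradient at `x k` of `x ↦ L_{c_k}(x, λ^{k-1}, μ^{k-1})`. -/
  subgrad : ∀ k, 1 ≤ k → ∀ x' : X,
    AugLag f h g (c k) (x k) (lam (k - 1)) (mu (k - 1)) + ⟪y k, x' - x k⟫ ≤
      AugLag f h g (c k) x' (lam (k - 1)) (mu (k - 1))
  /-- The relative error criterion. -/
  err : ∀ k, 1 ≤ k →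
    (2 / c k) * |⟪w (k - 1) - x k, y k⟫| + ‖y k‖ ^ 2 ≤
      σ * (‖h (x k)‖ ^ 2 +
        ‖toE (fun i => min (mu (k - 1) i / c k) (-(g (x k) i)))‖ ^ 2)
  lam_update : ∀ k, 1 ≤ k → lam k = lam (k - 1) + c k • h (x k)
  mu_update : ∀ k, 1 ≤ k → mu k = toE (fun i => max 0 (mu (k - 1) i + c k * g (x k) i))
  w_update : ∀ k, 1 ≤ k → w k = w (k - 1) - c k • y k

section Helpers

variable {X : Type*} [NormedAddCommGroup X] [InnerProductSpace ℝ X] [FiniteDimensional ℝ X]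
variable {m1 m2 : ℕ}

lemma innerE {m : ℕ} (v w : Evec m) : ⟪v, w⟫ = ∑ i, v i * w i := by
  simp [PiLp.inner_apply, RCLike.inner_apply, mul_comm]

lemma normE_sq {m : ℕ} (v : Evec m) : ‖v‖ ^ 2 = ∑ i, (v i) ^ 2 := by
  rw [← real_inner_self_eq_norm_sq, innerE]
  simp [sq]

lemma Lag_eq (f : X → ℝ) (h : X → Evec m1) (g : X → Evec m2) (x : X)
    (lam : Evec m1) (mu : Evec m2) :
    Lag f h g x lam mu = f x + ∑ i, lam i * h x i + ∑ i, mu i * g x i := by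
  rw [Lag, innerE, innerE]

lemma hasDerivAt_maxsq (s : ℝ) :
    HasDerivAt (fun t : ℝ => (max 0 t) ^ 2) (2 * max 0 s) s := by
  rcases lt_trichotomy s 0 with hs | hs | hs
  · have : (fun t : ℝ => (max 0 t) ^ 2) =ᶠ[nhds s] fun _ => (0 : ℝ) := by
      filter_upwards [Iio_mem_nhds hs] with t ht
      simp [max_eq_left (le_of_lt (Set.mem_Iio.mp ht))]
    have h0 : HasDerivAt (fun _ : ℝ => (0:ℝ)) 0 s := hasDerivAt_const s 0
    simpa [max_eq_left hs.le] using h0.congr_of_eventuallyEq this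
  · subst hs
    rw [hasDerivAt_iff_isLittleO]
    rw [Asymptotics.isLittleO_iff]
    intro ε hε
    filter_upwards [Metric.ball_mem_nhds (0:ℝ) hε] with t ht
    have h1 : |max 0 t| ≤ |t| := by
      rcases le_total t 0 with h | h
      · simp [max_eq_left h]
      · simp [max_eq_right h, abs_of_nonneg h]
    have ht' : |t| < ε := by simpa [Real.dist_eq] using ht
    calc ‖(max 0 t) ^ 2 - (max 0 (0:ℝ)) ^ 2 - (t - 0) • (2 * max 0 (0:ℝ))‖
        = |max 0 t| ^ 2 := by simp [sq_abs]
      _ ≤ |t| * |t| := by rw [sq]; exact mul_le_mul h1 h1 (abs_nonneg _) (abs_nonneg _)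
      _ ≤ ε * ‖t - 0‖ := by
          simp only [sub_zero, Real.norm_eq_abs]
          exact mul_le_mul ht'.le le_rfl (abs_nonneg _) hε.le
  · have : (fun t : ℝ => (max 0 t) ^ 2) =ᶠ[nhds s] fun t => t ^ 2 := by
      filter_upwards [Ioi_mem_nhds hs] with t ht
      simp [max_eq_right (le_of_lt (Set.mem_Ioi.mp ht))]
    have h0 : HasDerivAt (fun t : ℝ => t ^ 2) (2 * s) s := by
      simpa using (hasDerivAt_pow 2 s)
    simpa [max_eq_right hs.le] using h0.congr_of_eventuallyEq this

/-- Subgradient transfer: if `y` is a subgradient of `F + ψ` at `x₀`, `F` convex and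
`ψ` differentiable at `x₀` with zero derivative, then `y` is a subgradient of `F`. -/
lemma subgrad_transfer {F ψ : X → ℝ} (hF : ConvexOn ℝ Set.univ F)
    {x₀ : X} (hψ : ∀ d : X, HasDerivAt (fun t : ℝ => ψ (x₀ + t • d)) 0 0) {y : X}
    (hsub : ∀ x', F x₀ + ψ x₀ + ⟪y, x' - x₀⟫ ≤ F x' + ψ x') :
    ∀ x', F x₀ + ⟪y, x' - x₀⟫ ≤ F x' := by
  intro x'
  set d := x' - x₀ with hd
  have hφ : HasDerivAt (fun t : ℝ => ψ (x₀ + t • d)) 0 0 := hψ d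
  have key : ∀ t ∈ Set.Ioo (0:ℝ) 1,
      ⟪y, d⟫ - (F x' - F x₀) ≤ (ψ (x₀ + t • d) - ψ x₀) / t := by
    intro t ht
    have h1 : F x₀ + ψ x₀ + ⟪y, t • d⟫ ≤ F (x₀ + t • d) + ψ (x₀ + t • d) := by
      have := hsub (x₀ + t • d)
      simpa using this
    have hcomb : x₀ + t • d = (1 - t) • x₀ + t • x' := by
      rw [hd]; module
    have h2 : F (x₀ + t • d) ≤ (1 - t) * F x₀ + t * F x' := by
      rw [hcomb]
      exact hF.2 (Set.mem_univ x₀) (Set.mem_univ x') (by linarith [ht.2]) ht.1.le (by ring)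
    have h3 : t * ⟪y, d⟫ ≤ t * (F x' - F x₀) + (ψ (x₀ + t • d) - ψ x₀) := by
      have hin : ⟪y, t • d⟫ = t * ⟪y, d⟫ := real_inner_smul_right y d t
      nlinarith [h1, h2]
    rw [le_div_iff₀ ht.1]
    nlinarith [h3]
  have hslope : Filter.Tendsto (fun t : ℝ => (ψ (x₀ + t • d) - ψ x₀) / t)
      (nhdsWithin 0 (Set.Ioi 0)) (nhds 0) := by
    have := hasDerivAt_iff_tendsto_slope.1 hφ
    have h2 := this.mono_left (nhdsWithin_mono 0 (by
      intro t ht; exact Set.mem_compl (by simpa using (ne_of_gt ht)) : Set.Ioi (0:ℝ) ⊆ {0}ᶜ))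
    have : (fun t : ℝ => (ψ (x₀ + t • d) - ψ x₀) / t) = slope (fun t : ℝ => ψ (x₀ + t • d)) 0 := by
      funext t
      rw [slope_def_field]
      simp [div_eq_inv_mul]
    rw [this]
    exact h2
  have hfinal : ⟪y, d⟫ - (F x' - F x₀) ≤ 0 := by
    refine ge_of_tendsto hslope ?_
    filter_upwards [Ioo_mem_nhdsGT_of_mem (by norm_num : (0:ℝ) ∈ Set.Ico (0:ℝ) 1)] with t ht
    exact key t ht
  linarith [hfinal]

end Helpers
section Helpers2
set_option linter.unusedSectionVars false

variable {X : Type*} [NormedAddCommGroup X] [InnerProductSpace ℝ X] [FiniteDimensional ℝ X]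
variable {m1 m2 : ℕ} {f : X → ℝ} {h : X → Evec m1} {g : X → Evec m2}

/-- Monotonicity of the saddle subdifferential, paired against an exact saddle point. -/
lemma saddle_mono {x x' y : X} {lam lam' u : Evec m1} {mu mu' v : Evec m2}
    (hmu : ∀ i, 0 ≤ mu i) (hmu' : ∀ i, 0 ≤ mu' i)
    (h1 : saddleSubdiff f h g x lam mu y u v)
    (h2 : saddleSubdiff f h g x' lam' mu' 0 0 0) :
    0 ≤ ⟪y, x - x'⟫ + ⟪u, lam - lam'⟫ + ⟪v, mu - mu'⟫ := by
  have a := h1.1 x'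
  have b := h1.2 lam' mu' hmu'
  have d := h2.2 lam mu hmu
  have b2 := h2.1 x
  simp only [inner_zero_left, add_zero] at b2
  have e1 : ⟪y, x - x'⟫ = -⟪y, x' - x⟫ := by rw [← inner_neg_right, neg_sub]
  have e2 : ⟪u, lam - lam'⟫ = -⟪u, lam' - lam⟫ := by rw [← inner_neg_right, neg_sub]
  have e3 : ⟪v, mu - mu'⟫ = -⟪v, mu' - mu⟫ := by rw [← inner_neg_right, neg_sub]
  simp only [inner_zero_left] at d
  linarith [a, b, d, b2]

lemma primal_feasible_le {x' : X} (lamb : Evec m1) {mub : Evec m2}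
    (hmub : ∀ i, 0 ≤ mub i) (hfe : h x' = 0) (hge : ∀ i, g x' i ≤ 0) :
    Lag f h g x' lamb mub ≤ f x' := by
  rw [Lag_eq, hfe]
  have : ∑ i, mub i * g x' i ≤ 0 :=
    Finset.sum_nonpos fun i _ => mul_nonpos_of_nonneg_of_nonpos (hmub i) (hge i)
  simp only [PiLp.zero_apply, mul_zero, Finset.sum_const_zero, add_zero]
  linarith

/-- Forward direction: a saddle point consists of a primal and a dual solution. -/
lemma saddle_props {xb : X} {lamb : Evec m1} {mub : Evec m2}
    (hmub : ∀ i, 0 ≤ mub i) (hs : saddleSubdiff f h g xb lamb mub 0 0 0) :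
    h xb = 0 ∧ (∀ i, g xb i ≤ 0) ∧ (∑ i, mub i * g xb i) = 0 ∧ xb ∈ PrimalOpt f h g ∧
    dualFun f h g lamb mub = ((f xb : ℝ) : EReal) ∧ mkDual lamb mub ∈ DualOpt f h g := by
  have key2 := hs.2
  simp only [inner_zero_left, sub_zero] at key2
  -- h xb = 0
  have hh0 : h xb = 0 := by
    have := key2 (lamb + h xb) mub hmub
    rw [Lag_eq, Lag_eq] at this
    have hsum : ∑ i, (lamb + h xb) i * h xb i = ∑ i, lamb i * h xb i + ∑ i, h xb i * h xb i := by
      rw [← Finset.sum_add_distrib]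
      congr 1; funext i; simp [PiLp.add_apply]; ring
    rw [hsum] at this
    have hns : ∑ i, h xb i * h xb i ≤ 0 := by linarith
    have : ‖h xb‖ ^ 2 ≤ 0 := by rw [normE_sq]; simpa [sq] using hns
    have : ‖h xb‖ = 0 := by nlinarith [norm_nonneg (h xb)]
    exact norm_eq_zero.mp this
  -- g xb i ≤ 0
  have hg0 : ∀ i, g xb i ≤ 0 := by
    intro i
    have := key2 lamb (toE fun j => mub j + if j = i then 1 else 0)
      (fun j => by
        simp only [toE]; have := hmub j; split <;> linarith)
    rw [Lag_eq, Lag_eq] at this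
    have hsum : ∑ j, (toE fun j => mub j + if j = i then 1 else 0) j * g xb j
        = ∑ j, mub j * g xb j + g xb i := by
      simp only [toE, add_mul, ite_mul, one_mul, zero_mul, Finset.sum_add_distrib]
      rw [Finset.sum_ite_eq' Finset.univ i (fun j => g xb j)]
      simp
    rw [hsum] at this
    linarith
  -- complementarity
  have hcompl : (∑ i, mub i * g xb i) = 0 := by
    have hle : (∑ i, mub i * g xb i) ≤ 0 :=
      Finset.sum_nonpos fun i _ => mul_nonpos_of_nonneg_of_nonpos (hmub i) (hg0 i)
    have := key2 lamb 0 (fun j => le_refl 0)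
    rw [Lag_eq, Lag_eq] at this
    simp only [PiLp.zero_apply, zero_mul, Finset.sum_const_zero, add_zero] at this
    linarith
  -- value of Lagrangian at the saddle
  have hval : Lag f h g xb lamb mub = f xb := by
    rw [Lag_eq, hh0, hcompl]
    simp
  -- first saddle inequality, cleaned
  have key1 : ∀ x', f xb ≤ Lag f h g x' lamb mub := by
    intro x'
    have := hs.1 x'
    rw [hval] at this
    simpa using this
  -- primal optimality
  have hpo : xb ∈ PrimalOpt f h g := by
    refine ⟨hh0, hg0, fun x' hfe hge => ?_⟩
    exact le_trans (key1 x') (primal_feasible_le lamb hmub hfe hge)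
  -- dual function value
  have hdv : dualFun f h g lamb mub = ((f xb : ℝ) : EReal) := by
    apply le_antisymm
    · exact le_trans (iInf_le _ xb) (by rw [hval])
    · exact le_iInf fun x' => EReal.coe_le_coe_iff.mpr (key1 x')
  refine ⟨hh0, hg0, hcompl, hpo, hdv, lamb, mub, rfl, hmub, fun lam' mu' hmu' => ?_⟩
  calc dualFun f h g lam' mu' ≤ ((Lag f h g xb lam' mu' : ℝ) : EReal) := iInf_le _ xb
    _ ≤ ((Lag f h g xb lamb mub : ℝ) : EReal) := EReal.coe_le_coe_iff.mpr (key2 lam' mu' hmu')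
    _ = dualFun f h g lamb mub := by rw [hval, hdv]

/-- Converse: if some saddle point exists, any (primal solution, dual solution) pair
is a saddle point. -/
lemma opt_is_saddle (hsad : (SaddlePoints f h g).Nonempty) {xs : X}
    {lams : Evec m1} {mus : Evec m2}
    (hx : xs ∈ PrimalOpt f h g) (hmus : ∀ i, 0 ≤ mus i)
    (hopt : ∀ (lam' : Evec m1) (mu' : Evec m2), (∀ i, 0 ≤ mu' i) →
      dualFun f h g lam' mu' ≤ dualFun f h g lams mus) :
    saddleSubdiff f h g xs lams mus 0 0 0 := by
  obtain ⟨s, xb, lamb, mub, rfl, hmub, hsdl⟩ := hsad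
  obtain ⟨hh0, hg0, hcompl, hpo, hdv, hdo⟩ := saddle_props hmub hsdl
  have hfeq : f xs = f xb := le_antisymm (hx.2.2 xb hh0 hg0) (hpo.2.2 xs hx.1 hx.2.1)
  have hup : Lag f h g xs lams mus ≤ f xs := primal_feasible_le lams hmus hx.1 hx.2.1
  have hlow : ((f xs : ℝ) : EReal) ≤ dualFun f h g lams mus := by
    rw [hfeq, ← hdv]; exact hopt lamb mub hmub
  have hchain : dualFun f h g lams mus = ((Lag f h g xs lams mus : ℝ) : EReal) := by
    apply le_antisymm (iInf_le _ xs)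
    exact le_trans (EReal.coe_le_coe_iff.mpr hup) hlow
  have hLagval : Lag f h g xs lams mus = f xs := by
    apply le_antisymm hup
    have h1 : ((f xs : ℝ) : EReal) ≤ ((Lag f h g xs lams mus : ℝ) : EReal) :=
      le_trans hlow (le_of_eq hchain)
    exact EReal.coe_le_coe_iff.mp h1
  constructor
  · intro x'
    have h1 : ((f xs : ℝ) : EReal) ≤ ((Lag f h g x' lams mus : ℝ) : EReal) :=
      le_trans hlow (iInf_le _ x')
    have := EReal.coe_le_coe_iff.mp h1
    simpa [hLagval] using this
  · intro lam' mu' hmu'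
    have := primal_feasible_le (f := f) (h := h) (g := g) (x' := xs) lam' hmu' hx.1 hx.2.1
    simpa [hLagval] using this

end Helpers2
section Helpers3
set_option linter.unusedSectionVars false

variable {X : Type*} [NormedAddCommGroup X] [InnerProductSpace ℝ X] [FiniteDimensional ℝ X]
variable {m1 m2 : ℕ} {f : X → ℝ} {h : X → Evec m1} {g : X → Evec m2}

lemma convexOn_finset_sum {ι : Type*} (s : Finset ι) {F : ι → X → ℝ}
    (hF : ∀ i ∈ s, ConvexOn ℝ Set.univ (F i)) :
    ConvexOn ℝ Set.univ (fun x => ∑ i ∈ s, F i x) := by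
  classical
  induction s using Finset.cons_induction with
  | empty => simpa using convexOn_const 0 convex_univ
  | cons a s ha ih =>
    simp only [Finset.sum_cons]
    exact (hF a (Finset.mem_cons_self a s)).add
      (ih fun i hi => hF i (Finset.mem_cons_of_mem hi))

/-- The key inclusion: a subgradient step on the augmented Lagrangian gives an element of
the saddle subdifferential of the ordinary Lagrangian at the updated multipliers. -/
lemma alm_subdiff (hf : ConvexOn ℝ Set.univ f)
    (hh : ∃ A : X →ᵃ[ℝ] Evec m1, ∀ z, h z = A z)
    (hg1 : ∀ i, ConvexOn ℝ Set.univ fun z => g z i)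
    (hg2 : ∀ i, ContDiff ℝ 1 fun z => g z i)
    {c : ℝ} (hc : 0 < c) (lam0 : Evec m1) (mu0 : Evec m2) {xk yk : X}
    (hsub : ∀ x', AugLag f h g c xk lam0 mu0 + ⟪yk, x' - xk⟫ ≤ AugLag f h g c x' lam0 mu0) :
    saddleSubdiff f h g xk (lam0 + c • h xk) (toE fun i => max 0 (mu0 i + c * g xk i))
      yk (-(h xk)) (toE fun i => min (mu0 i / c) (-(g xk i))) := by
  obtain ⟨A, hA⟩ := hh
  set lamk : Evec m1 := lam0 + c • h xk with hlamk
  set muk : Evec m2 := toE fun i => max 0 (mu0 i + c * g xk i) with hmuk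
  set vk : Evec m2 := toE fun i => min (mu0 i / c) (-(g xk i)) with hvk
  constructor
  · -- first saddle inequality
    set F : X → ℝ := fun x => Lag f h g x lamk muk with hF
    set ψ : X → ℝ := fun x => AugLag f h g c x lam0 mu0 - Lag f h g x lamk muk with hψdef
    have hFconv : ConvexOn ℝ Set.univ F := by
      have h2 : ConvexOn ℝ Set.univ (fun x : X => ∑ i, lamk i * h x i) := by
        refine ⟨convex_univ, fun p _ q _ a b ha hb hab => ?_⟩
        have hcombo : h (a • p + b • q) = a • h p + b • h q := by
          rw [hA, hA, hA, Convex.combo_affine_apply hab]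
        simp only [smul_eq_mul]
        rw [hcombo]
        apply le_of_eq
        rw [Finset.mul_sum, Finset.mul_sum, ← Finset.sum_add_distrib]
        refine Finset.sum_congr rfl fun i _ => ?_
        simp only [PiLp.add_apply, PiLp.smul_apply, smul_eq_mul]
        ring
      have h3 : ConvexOn ℝ Set.univ (fun x : X => ∑ i, muk i * g x i) := by
        refine convexOn_finset_sum _ fun i _ => ?_
        have hnn : 0 ≤ muk i := le_max_left 0 _
        simpa [smul_eq_mul] using (hg1 i).smul hnn
      have : F = fun x => (f x + ∑ i, lamk i * h x i) + ∑ i, muk i * g x i := by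
        funext x; exact Lag_eq f h g x lamk muk
      rw [this]
      exact (hf.add h2).add h3
    have hψderiv : ∀ d : X, HasDerivAt (fun t : ℝ => ψ (xk + t • d)) 0 0 := by
      intro d
      -- coordinates of the affine map
      have hHi : ∀ (i : Fin m1) (t : ℝ), h (xk + t • d) i
          = h xk i + t * (A.linear d) i := by
        intro i t
        have : xk + t • d = t • d +ᵥ xk := by rw [vadd_eq_add, add_comm]
        rw [hA, this, AffineMap.map_vadd, hA]
        simp [PiLp.add_apply, PiLp.smul_apply, smul_eq_mul]
        ring
      have hGi : ∀ i, HasDerivAt (fun t : ℝ => g (xk + t • d) i)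
          (fderiv ℝ (fun z => g z i) xk d) 0 := by
        intro i
        have hline : HasDerivAt (fun t : ℝ => xk + t • d) d 0 := by
          simpa using ((hasDerivAt_id (0:ℝ)).smul_const d).const_add xk
        have hdiff : HasFDerivAt (fun z => g z i) (fderiv ℝ (fun z => g z i) xk) (xk + (0:ℝ) • d) := by
          simpa using ((hg2 i).differentiable one_ne_zero).differentiableAt.hasFDerivAt
        exact hdiff.comp_hasDerivAt 0 hline
      -- P-part
      have hP : ∀ i : Fin m1, HasDerivAt
          (fun t : ℝ => (-(c * h xk i)) * h (xk + t • d) i + (c/2) * (h (xk + t • d) i)^2)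
          0 0 := by
        intro i
        simp only [hHi]
        set e := h xk i with he
        set b := (A.linear d) i with hb
        have h1 : HasDerivAt (fun t : ℝ => e + t * b) b 0 := by
          simpa using ((hasDerivAt_id (0:ℝ)).mul_const b).const_add e
        have h2 := (h1.const_mul (-(c * e))).add ((h1.pow 2).const_mul (c/2))
        exact h2.congr_deriv (by norm_num; ring)
      -- Q-part
      have hQ : ∀ i : Fin m2, HasDerivAt
          (fun t : ℝ => (1/(2*c)) * (max 0 (mu0 i + c * g (xk + t • d) i))^2
            - muk i * g (xk + t • d) i) 0 0 := by
        intro i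
        set gi' := fderiv ℝ (fun z => g z i) xk d
        have hinner : HasDerivAt (fun t : ℝ => mu0 i + c * g (xk + t • d) i)
            (c * gi') 0 := ((hGi i).const_mul c).const_add (mu0 i)
        have hmax := (hasDerivAt_maxsq (mu0 i + c * g (xk + (0:ℝ) • d) i)).comp 0 hinner
        have h2 := (hmax.const_mul (1/(2*c))).sub ((hGi i).const_mul (muk i))
        have hval : muk i = max 0 (mu0 i + c * g xk i) := rfl
        have hz : (1/(2*c)) * (2 * max 0 (mu0 i + c * g (xk + (0:ℝ) • d) i) * (c * gi'))
            - muk i * gi' = 0 := by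
          simp only [zero_smul, add_zero]
          rw [hval]
          field_simp
          ring
        rw [hz] at h2
        exact h2
      -- assemble
      have hsum : HasDerivAt (fun t : ℝ =>
          (∑ i, ((-(c * h xk i)) * h (xk + t • d) i + (c/2) * (h (xk + t • d) i)^2))
          + (∑ i, ((1/(2*c)) * (max 0 (mu0 i + c * g (xk + t • d) i))^2
              - muk i * g (xk + t • d) i))
          + (-(1/(2*c)) * ‖mu0‖^2)) 0 0 := by
        have s1 : HasDerivAt (fun t : ℝ =>
            ∑ i, ((-(c * h xk i)) * h (xk + t • d) i + (c/2) * (h (xk + t • d) i)^2))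
            (∑ _i : Fin m1, (0:ℝ)) 0 := HasDerivAt.fun_sum fun i _ => hP i
        have s2 : HasDerivAt (fun t : ℝ =>
            ∑ i, ((1/(2*c)) * (max 0 (mu0 i + c * g (xk + t • d) i))^2
              - muk i * g (xk + t • d) i))
            (∑ _i : Fin m2, (0:ℝ)) 0 := HasDerivAt.fun_sum fun i _ => hQ i
        have h4 := (s1.add s2).add_const (-(1/(2*c)) * ‖mu0‖^2)
        have h5 : (∑ _i : Fin m1, (0:ℝ)) + (∑ _i : Fin m2, (0:ℝ)) = 0 := by simp
        rw [h5] at h4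
        exact h4
      have hψeq : (fun t : ℝ => ψ (xk + t • d)) = fun t : ℝ =>
          (∑ i, ((-(c * h xk i)) * h (xk + t • d) i + (c/2) * (h (xk + t • d) i)^2))
          + (∑ i, ((1/(2*c)) * (max 0 (mu0 i + c * g (xk + t • d) i))^2
              - muk i * g (xk + t • d) i))
          + (-(1/(2*c)) * ‖mu0‖^2) := by
        funext t
        rw [hψdef]
        simp only [AugLag, Lag_eq, innerE, normE_sq, toE, hlamk, hmuk,
          PiLp.add_apply, PiLp.smul_apply, smul_eq_mul]
        simp only [add_mul, neg_mul, Finset.sum_add_distrib, Finset.sum_sub_distrib,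
          Finset.sum_neg_distrib, ← Finset.mul_sum]
        ring
      rw [hψeq]
      exact hsum
    have := subgrad_transfer hFconv hψderiv (y := yk)
      (fun x' => by
        have h1 := hsub x'
        have e1 : ∀ z, AugLag f h g c z lam0 mu0 = F z + ψ z := fun z => by
          rw [hF, hψdef]; ring
        rw [e1 xk, e1 x'] at h1
        linarith [h1])
    exact this
  · -- second saddle inequality
    intro lam' mu' hmu'
    have hlam : ∀ i, lamk i = lam0 i + c * h xk i := fun i => by
      rw [hlamk]; simp [PiLp.add_apply, PiLp.smul_apply, smul_eq_mul]
    rw [Lag_eq, Lag_eq, innerE, innerE]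
    have key : ∀ i : Fin m2, (mu' i - muk i) * (g xk i + vk i) ≤ 0 := by
      intro i
      have hgv : g xk i + vk i ≤ 0 := by
        rw [hvk]; simp only [toE]
        rcases le_total (mu0 i / c) (-(g xk i)) with hle | hle
        · rw [min_eq_left hle]; linarith
        · rw [min_eq_right hle]; linarith
      rcases le_or_gt (mu0 i + c * g xk i) 0 with hcase | hcase
      · have hmuk0 : muk i = 0 := by
          rw [hmuk]; simp only [toE]; exact max_eq_left hcase
        rw [hmuk0, sub_zero]
        exact mul_nonpos_of_nonneg_of_nonpos (hmu' i) hgv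
      · have hgv0 : g xk i + vk i = 0 := by
          rw [hvk]; simp only [toE]
          have : -(g xk i) ≤ mu0 i / c := by
            rw [le_div_iff₀ hc]; nlinarith
          rw [min_eq_right this]; ring
        rw [hgv0, mul_zero]
    have hsum : ∑ i, (mu' i - muk i) * (g xk i + vk i) ≤ 0 :=
      Finset.sum_nonpos fun i _ => key i
    have expand : ∑ i, (mu' i - muk i) * (g xk i + vk i)
        = (∑ i, mu' i * g xk i) - (∑ i, muk i * g xk i)
          + ∑ i, vk i * (mu' i - muk i) := by
      rw [← Finset.sum_sub_distrib, ← Finset.sum_add_distrib]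
      refine Finset.sum_congr rfl fun i _ => ?_
      ring
    have e1 : ∑ i, (-(h xk)) i * (lam' - lamk) i
        = -∑ i, h xk i * (lam' i - lamk i) := by
      rw [← Finset.sum_neg_distrib]
      refine Finset.sum_congr rfl fun i _ => ?_
      simp only [PiLp.neg_apply, PiLp.sub_apply]
      ring
    have e2 : ∑ i, vk i * (mu' - muk) i = ∑ i, vk i * (mu' i - muk i) := by
      refine Finset.sum_congr rfl fun i _ => ?_
      simp only [PiLp.sub_apply]
    have e3 : ∑ i, lamk i * h xk i + ∑ i, h xk i * (lam' i - lamk i)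
        = ∑ i, lam' i * h xk i := by
      rw [← Finset.sum_add_distrib]
      refine Finset.sum_congr rfl fun i _ => ?_
      ring
    have main : (∑ i, mu' i * g xk i) - (∑ i, muk i * g xk i)
        + ∑ i, vk i * (mu' i - muk i) ≤ 0 := by
      rw [← expand]; exact hsum
    linarith [e1, e2, e3, main]

end Helpers3
section Helpers4
set_option linter.unusedSectionVars false

lemma le_of_forall_pos_le_add' {a b : ℝ} (hab : ∀ ε > 0, a ≤ b + ε) : a ≤ b := by
  by_contra hlt
  push_neg at hlt
  have := hab ((a - b)/2) (by linarith)
  linarith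

lemma sqrt_mul_sqrt_le {σ κ : ℝ} (hσ : 0 ≤ σ) (hκ : 0 ≤ κ) :
    Real.sqrt σ * (κ * Real.sqrt (1 + σ)) ≤ κ * (σ + Real.sqrt σ) := by
  have h1 : Real.sqrt (1 + σ) ≤ 1 + Real.sqrt σ := by
    have h2 : (1:ℝ) + σ ≤ (1 + Real.sqrt σ)^2 := by
      nlinarith [Real.sq_sqrt hσ, Real.sqrt_nonneg σ]
    calc Real.sqrt (1 + σ) ≤ Real.sqrt ((1 + Real.sqrt σ)^2) := Real.sqrt_le_sqrt h2
      _ = 1 + Real.sqrt σ := Real.sqrt_sq (by positivity)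
  nlinarith [Real.sqrt_nonneg σ, Real.sq_sqrt hσ, Real.sqrt_nonneg (1+σ),
    mul_le_mul_of_nonneg_left h1 (mul_nonneg (Real.sqrt_nonneg σ) hκ)]

lemma norm_le_sqrt_of_sq_le {t B : ℝ} (hB : 0 ≤ B) (h : t^2 ≤ B) (ht : 0 ≤ t) :
    t ≤ Real.sqrt B := by
  calc t = Real.sqrt (t^2) := (Real.sqrt_sq ht).symm
    _ ≤ Real.sqrt B := Real.sqrt_le_sqrt h

end Helpers4
set_option maxHeartbeats 2000000 in
theorem eckstein_silva_alm_dual_Q_linear_rate {f : X → ℝ} {h : X → Evec m1} {g : X → Evec m2}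
    (hf : ConvexOn ℝ Set.univ f)
    (hh : ∃ A : X →ᵃ[ℝ] Evec m1, ∀ z, h z = A z)
    (hg1 : ∀ i, ConvexOn ℝ Set.univ (fun z => g z i))
    (hg2 : ∀ i, ContDiff ℝ 1 (fun z => g z i))
    {σ : ℝ} {c : ℕ → ℝ} {x y w : ℕ → X} {lam : ℕ → Evec m1} {mu : ℕ → Evec m2}
    (halg : ALMSeq f h g σ c x y w lam mu)
    (hsad : (SaddlePoints f h g).Nonempty)
    {κ ε : ℝ} (hκ : 0 < κ) (hε : 0 < ε)
    (heb : ∀ (z : X) (lam' : Evec m1) (mu' : Evec m2) (y' : X) (u' : Evec m1) (v' : Evec m2),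
      (∀ i, 0 ≤ mu' i) → saddleSubdiff f h g z lam' mu' y' u' v' →
      ‖asT (y', mkDual u' v')‖ ≤ ε →
      Metric.infDist (asT (z, mkDual lam' mu')) (asT '' SaddlePoints f h g) ≤
        κ * ‖asT (y', mkDual u' v')‖)
    -- `liminf c k > 2 κ (σ + √σ)`, phrased without `Filter.liminf` junk values:
    (hliminf : ∃ δ > 0, ∀ᶠ k in atTop, 2 * κ * (σ + Real.sqrt σ) + δ ≤ c k)
 :
    ∃ k1 : ℕ, 0 < k1 ∧ ∀ k, k1 ≤ k →
      Metric.infDist (mkDual (lam k) (mu k)) (DualOpt f h g) ≤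
        (κ * Real.sqrt (1 + σ) /
          Real.sqrt ((c k) ^ 2 - 2 * κ * (σ + Real.sqrt σ) * c k + κ ^ 2 * (1 + σ))) *
        Metric.infDist (mkDual (lam (k - 1)) (mu (k - 1))) (DualOpt f h g) := by
  classical
  obtain ⟨s0, hs0mem⟩ := hsad
  obtain ⟨xb, lamb, mub, hs0eq, hmub, hsdl0⟩ := hs0mem
  have hσ0 := halg.sigma_nonneg
  have hσ1 := halg.sigma_lt_one
  obtain ⟨δ, hδ, hev⟩ := hliminf
  obtain ⟨cmin, hcmin, hcge⟩ := halg.c_inf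
  -- nonnegativity of multipliers
  have hmu_nn : ∀ k i, 0 ≤ mu k i := by
    intro k i
    cases k with
    | zero => exact halg.mu0_nonneg i
    | succ n =>
      rw [halg.mu_update (n+1) (by omega)]
      exact le_max_left _ _
  -- the dual displacement vectors
  set uμ : ℕ → Evec m2 := fun k => toE fun i => min (mu (k-1) i / c k) (-(g (x k) i)) with huμ
  set U : ℕ → DualPair m1 m2 := fun k => mkDual (-(h (x k))) (uμ k) with hU
  set p : ℕ → DualPair m1 m2 := fun k => mkDual (lam k) (mu k) with hp
  set pb : DualPair m1 m2 := mkDual lamb mub with hpb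
  -- the saddle subdifferential inclusion
  have hsd : ∀ k, 1 ≤ k →
      saddleSubdiff f h g (x k) (lam k) (mu k) (y k) (-(h (x k))) (uμ k) := by
    intro k hk
    have := alm_subdiff hf hh hg1 hg2 (halg.c_pos k) (lam (k-1)) (mu (k-1))
      (halg.subgrad k hk)
    rw [halg.lam_update k hk, halg.mu_update k hk]
    exact this
  -- norms on the product space
  have hU_sq : ∀ k, ‖U k‖^2 = ‖h (x k)‖^2 + ‖uμ k‖^2 := by
    intro k
    rw [hU]
    rw [WithLp.prod_norm_sq_eq_of_L2]
    show ‖-(h (x k))‖^2 + ‖uμ k‖^2 = _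
    rw [norm_neg]
  -- the error criterion, restated
  have herr : ∀ k, 1 ≤ k →
      (2 / c k) * |⟪w (k-1) - x k, y k⟫| + ‖y k‖^2 ≤ σ * ‖U k‖^2 := by
    intro k hk
    rw [hU_sq]
    exact halg.err k hk
  have hy_sq : ∀ k, 1 ≤ k → ‖y k‖^2 ≤ σ * ‖U k‖^2 := by
    intro k hk
    have h1 := herr k hk
    have h2 : 0 ≤ (2 / c k) * |⟪w (k-1) - x k, y k⟫| := by
      have := halg.c_pos k
      positivity
    linarith
  -- multiplier update identity
  have hpU : ∀ k, 1 ≤ k → p (k-1) = p k + c k • U k := by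
    intro k hk
    have h1 : lam (k-1) = lam k + c k • (-(h (x k))) := by
      rw [halg.lam_update k hk, smul_neg]
      abel
    have h2 : mu (k-1) = mu k + c k • uμ k := by
      rw [halg.mu_update k hk]
      ext i
      have hc := halg.c_pos k
      simp only [huμ, PiLp.add_apply, PiLp.smul_apply, smul_eq_mul, toE]
      rcases le_total (mu (k-1) i + c k * g (x k) i) 0 with hcase | hcase
      · rw [max_eq_left hcase, min_eq_left (by
          rw [div_le_iff₀ hc]; nlinarith)]
        field_simp
        ring
      · rw [max_eq_right hcase, min_eq_right (by
          rw [le_div_iff₀ hc]; nlinarith)]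
        ring
    show mkDual (lam (k-1)) (mu (k-1)) = _
    rw [h1, h2]
    rfl
  -- splitting the dual inner product
  have hinnerU : ∀ k (q : DualPair m1 m2),
      ⟪U k, p k - q⟫ = ⟪-(h (x k)), lam k - q.fst⟫ + ⟪uμ k, mu k - q.snd⟫ := by
    intro k q
    rw [WithLp.prod_inner_apply]
    rfl
  -- Fejér-type inequality for the full primal-dual sequence
  set Z : ℕ → ℝ := fun k => ‖w k - xb‖^2 + ‖p k - pb‖^2 with hZ
  have hfejer : ∀ k, 1 ≤ k → Z k + (1-σ) * (c k)^2 * ‖U k‖^2 ≤ Z (k-1) := by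
    intro k hk
    have hck := halg.c_pos k
    have eqw : ‖w k - xb‖^2 = ‖w (k-1) - xb‖^2
        - 2 * (c k * (⟪w (k-1) - x k, y k⟫ + ⟪x k - xb, y k⟫))
        + (c k)^2 * ‖y k‖^2 := by
      have hw : w k - xb = (w (k-1) - xb) - c k • y k := by
        rw [halg.w_update k hk]; abel
      rw [hw, norm_sub_sq_real, real_inner_smul_right, norm_smul]
      have hsplit : w (k-1) - xb = (w (k-1) - x k) + (x k - xb) := by abel
      rw [hsplit, inner_add_left]
      simp [mul_pow, sq_abs]
    have eqp : ‖p k - pb‖^2 = ‖p (k-1) - pb‖^2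
        - 2 * (c k * (⟪p k - pb, U k⟫ + c k * ‖U k‖^2))
        + (c k)^2 * ‖U k‖^2 := by
      have hpp : p (k-1) - pb = (p k - pb) + c k • U k := by
        rw [hpU k hk]; abel
      have e1 : ‖p (k-1) - pb‖^2 = ‖p k - pb‖^2
          + 2 * (c k * ⟪p k - pb, U k⟫) + (c k)^2 * ‖U k‖^2 := by
        rw [hpp, norm_add_sq_real, real_inner_smul_right, norm_smul]
        simp [mul_pow, sq_abs]
      linarith
    have hsplitU : ⟪p k - pb, U k⟫
        = ⟪-(h (x k)), lam k - lamb⟫ + ⟪uμ k, mu k - mub⟫ := by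
      rw [real_inner_comm]
      exact hinnerU k pb
    have hM : 0 ≤ ⟪x k - xb, y k⟫ + ⟪p k - pb, U k⟫ := by
      rw [hsplitU]
      have h9 := saddle_mono (fun i => hmu_nn k i) hmub (hsd k hk) hsdl0
      have hcomm : ⟪x k - xb, y k⟫ = ⟪y k, x k - xb⟫ := real_inner_comm _ _
      linarith
    have hIle : |⟪w (k-1) - x k, y k⟫| ≤ (c k / 2) * (σ * ‖U k‖^2 - ‖y k‖^2) := by
      have h1 := herr k hk
      have h2 : (2 / c k) * |⟪w (k-1) - x k, y k⟫| ≤ σ * ‖U k‖^2 - ‖y k‖^2 := by linarith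
      have h3 := mul_le_mul_of_nonneg_left h2 (le_of_lt (half_pos hck))
      calc |⟪w (k-1) - x k, y k⟫|
          = (c k / 2) * ((2 / c k) * |⟪w (k-1) - x k, y k⟫|) := by
            field_simp
        _ ≤ (c k / 2) * (σ * ‖U k‖^2 - ‖y k‖^2) := h3
    have hckM : 0 ≤ c k * (⟪x k - xb, y k⟫ + ⟪p k - pb, U k⟫) :=
      mul_nonneg hck.le hM
    have hckI : c k * (-⟪w (k-1) - x k, y k⟫)
        ≤ c k * ((c k / 2) * (σ * ‖U k‖^2 - ‖y k‖^2)) :=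
      mul_le_mul_of_nonneg_left (le_trans (neg_le_abs _) hIle) hck.le
    show ‖w k - xb‖^2 + ‖p k - pb‖^2 + (1-σ) * (c k)^2 * ‖U k‖^2
        ≤ ‖w (k-1) - xb‖^2 + ‖p (k-1) - pb‖^2
    linarith [eqw, eqp, hckM, hckI]
  -- the displacements tend to zero
  have hZ_anti : Antitone Z := by
    apply antitone_nat_of_succ_le
    intro k
    have h1 := hfejer (k+1) (by omega)
    have h2 : 0 ≤ (1-σ) * (c (k+1))^2 * ‖U (k+1)‖^2 :=
      mul_nonneg (mul_nonneg (by linarith) (sq_nonneg _)) (sq_nonneg _)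
    simpa using le_trans (by linarith) (le_refl (Z ((k+1) - 1)))
  have hZ0 : ∀ k, 0 ≤ Z k := fun k => by rw [hZ]; positivity
  have htendZ : Tendsto Z atTop (nhds (⨅ k, Z k)) :=
    tendsto_atTop_ciInf hZ_anti ⟨0, by rintro z ⟨k, rfl⟩; exact hZ0 k⟩
  have hdiff : Tendsto (fun k => Z k - Z (k+1)) atTop (nhds 0) := by
    have h2 : Tendsto (fun k => Z (k+1)) atTop (nhds (⨅ k, Z k)) :=
      htendZ.comp (tendsto_add_atTop_nat 1)
    simpa using htendZ.sub h2
  have hUsq_to : Tendsto (fun k => ‖U (k+1)‖^2) atTop (nhds 0) := by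
    have hC0 : (0:ℝ) < (1-σ) * cmin^2 :=
      mul_pos (by linarith) (pow_pos hcmin 2)
    refine squeeze_zero (f := fun k => ‖U (k+1)‖^2)
      (g := fun k => (Z k - Z (k+1)) / ((1-σ) * cmin^2)) (fun k => by positivity) ?_ ?_
    · intro k
      show ‖U (k+1)‖^2 ≤ (Z k - Z (k+1)) / ((1-σ) * cmin^2)
      rw [le_div_iff₀ hC0]
      have h1 := hfejer (k+1) (by omega)
      have h2 : (1-σ) * cmin^2 * ‖U (k+1)‖^2 ≤ (1-σ) * (c (k+1))^2 * ‖U (k+1)‖^2 := by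
        have h3 : cmin^2 ≤ (c (k+1))^2 := by
          have h4 := hcge (k+1)
          nlinarith [hcmin]
        exact mul_le_mul_of_nonneg_right
          (mul_le_mul_of_nonneg_left h3 (by linarith)) (sq_nonneg _)
      simp only [Nat.add_sub_cancel] at h1
      linarith [h1, h2]
    · simpa using hdiff.div_const ((1-σ) * cmin^2)
  have hUto : Tendsto (fun k => ‖U k‖) atTop (nhds 0) := by
    rw [← tendsto_add_atTop_iff_nat 1]
    have h1 : Tendsto (fun k => Real.sqrt (‖U (k+1)‖^2)) atTop (nhds (Real.sqrt 0)) :=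
      hUsq_to.sqrt
    simp only [Real.sqrt_zero] at h1
    convert h1 using 2 with k
    rw [Real.sqrt_sq (norm_nonneg _)]
  -- collect the eventual conditions
  have hεpos' : (0:ℝ) < ε / Real.sqrt (1 + σ) := by
    have : (0:ℝ) < Real.sqrt (1+σ) := Real.sqrt_pos.mpr (by linarith)
    positivity
  have hevU : ∀ᶠ k in atTop, ‖U k‖ < ε / Real.sqrt (1 + σ) :=
    hUto.eventually_lt_const hεpos'
  obtain ⟨N, hN⟩ := eventually_atTop.mp (hev.and hevU)
  refine ⟨N + 1, Nat.succ_pos N, fun k hkN => ?_⟩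
  obtain ⟨hck_large, hUk_small⟩ := hN k (by omega)
  have hk1 : 1 ≤ k := by omega
  have hck := halg.c_pos k
  set Pstar := DualOpt f h g with hPstar
  have hPne : Pstar.Nonempty := ⟨pb, (saddle_props hmub hsdl0).2.2.2.2.2⟩
  have hSmem : s0 ∈ SaddlePoints f h g := ⟨xb, lamb, mub, hs0eq, hmub, hsdl0⟩
  have hSne : (asT '' SaddlePoints f h g).Nonempty :=
    ⟨asT s0, Set.mem_image_of_mem _ hSmem⟩
  set rk : ℝ := ‖asT (y k, U k)‖ with hrk_def
  have hrk0 : 0 ≤ rk := norm_nonneg _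
  have htk0 : 0 ≤ ‖U k‖ := norm_nonneg _
  have hrk_sq : rk^2 = ‖y k‖^2 + ‖U k‖^2 := by
    rw [hrk_def, WithLp.prod_norm_sq_eq_of_L2]
    rfl
  have hsqrt1σ : (0:ℝ) < Real.sqrt (1+σ) := Real.sqrt_pos.mpr (by linarith)
  have hrk_le : rk ≤ Real.sqrt (1+σ) * ‖U k‖ := by
    have h1 : rk^2 ≤ (1+σ) * ‖U k‖^2 := by
      rw [hrk_sq]
      nlinarith [hy_sq k hk1, sq_nonneg ‖U k‖]
    calc rk = Real.sqrt (rk^2) := (Real.sqrt_sq hrk0).symm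
      _ ≤ Real.sqrt ((1+σ) * ‖U k‖^2) := Real.sqrt_le_sqrt h1
      _ = Real.sqrt (1+σ) * ‖U k‖ := by
          rw [Real.sqrt_mul (by linarith : (0:ℝ) ≤ 1+σ), Real.sqrt_sq htk0]
  have hrk_eps : rk ≤ ε := by
    have h1 : Real.sqrt (1+σ) * ‖U k‖ ≤ Real.sqrt (1+σ) * (ε / Real.sqrt (1+σ)) :=
      mul_le_mul_of_nonneg_left hUk_small.le hsqrt1σ.le
    rw [mul_div_cancel₀ _ (ne_of_gt hsqrt1σ)] at h1
    linarith [hrk_le]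
  have hEB : Metric.infDist (asT (x k, p k)) (asT '' SaddlePoints f h g) ≤ κ * rk :=
    heb (x k) (lam k) (mu k) (y k) (-(h (x k))) (uμ k) (fun i => hmu_nn k i)
      (hsd k hk1) hrk_eps
  have hcomp : ∀ a b : Triple X m1 m2,
      dist a.fst b.fst ≤ dist a b ∧ dist a.snd b.snd ≤ dist a b := by
    intro a b
    rw [WithLp.prod_dist_eq_of_L2]
    constructor
    · calc dist a.fst b.fst = Real.sqrt (dist a.fst b.fst ^ 2) := (Real.sqrt_sq dist_nonneg).symm
        _ ≤ _ := Real.sqrt_le_sqrt (by nlinarith [sq_nonneg (dist a.snd b.snd)])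
    · calc dist a.snd b.snd = Real.sqrt (dist a.snd b.snd ^ 2) := (Real.sqrt_sq dist_nonneg).symm
        _ ≤ _ := Real.sqrt_le_sqrt (by nlinarith [sq_nonneg (dist a.fst b.fst)])
  have hnear : ∀ η : ℝ, 0 < η → ∃ (xh : X) (ph : DualPair m1 m2),
      dist (x k) xh ≤ κ * rk + η ∧ dist (p k) ph ≤ κ * rk + η ∧
      xh ∈ PrimalOpt f h g ∧ ph ∈ Pstar := by
    intro η hη
    have hlt : Metric.infDist (asT (x k, p k)) (asT '' SaddlePoints f h g) < κ * rk + η := by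
      linarith [hEB]
    obtain ⟨z, hzmem, hzd⟩ := (Metric.infDist_lt_iff hSne).1 hlt
    obtain ⟨s, hs, rfl⟩ := hzmem
    obtain ⟨xh, lamh, muh, rfl, hmuh, hsdh⟩ := hs
    have hprops := saddle_props hmuh hsdh
    have hc1 := (hcomp (asT (x k, p k)) (asT (xh, mkDual lamh muh))).1
    have hc2 := (hcomp (asT (x k, p k)) (asT (xh, mkDual lamh muh))).2
    exact ⟨xh, mkDual lamh muh, le_trans hc1 hzd.le, le_trans hc2 hzd.le,
      hprops.2.2.2.1, hprops.2.2.2.2.2⟩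
  -- Claim 1 : distance bounded by the residual
  have hD1 : Metric.infDist (p k) Pstar ≤ κ * (Real.sqrt (1+σ) * ‖U k‖) := by
    have h1 : Metric.infDist (p k) Pstar ≤ κ * rk := by
      apply le_of_forall_pos_le_add'
      intro η hη
      obtain ⟨xh, ph, _, hd2, _, hph⟩ := hnear η hη
      exact le_trans (Metric.infDist_le_dist_of_mem hph) hd2
    have h2 := mul_le_mul_of_nonneg_left hrk_le hκ.le
    linarith
  -- Claim 2 : the Fejér inequality relative to the dual solution set
  have hD2 : (Metric.infDist (p k) Pstar)^2 ≤ (Metric.infDist (p (k-1)) Pstar)^2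
      - ((c k)^2 - 2*κ*(σ + Real.sqrt σ)*(c k)) * ‖U k‖^2 := by
    apply le_of_forall_pos_le_add'
    intro η hη
    set D0 := Metric.infDist (p (k-1)) Pstar with hD0def
    have hD00 : 0 ≤ D0 := Metric.infDist_nonneg
    set M := 2*D0 + 1 + 2*(c k)*(Real.sqrt σ * ‖U k‖) with hMdef
    have hM1 : 1 ≤ M := by
      have h0 : 0 ≤ 2*(c k)*(Real.sqrt σ * ‖U k‖) := by positivity
      linarith
    have hMpos : 0 < M := by linarith
    set η' := min 1 (η / M) with hη'def
    have hη'pos : 0 < η' := lt_min one_pos (div_pos hη hMpos)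
    have hη'1 : η' ≤ 1 := min_le_left _ _
    have hη'M : η' * M ≤ η := by
      have h1 : η' ≤ η / M := min_le_right _ _
      calc η' * M ≤ (η / M) * M := mul_le_mul_of_nonneg_right h1 hMpos.le
        _ = η := div_mul_cancel₀ η (ne_of_gt hMpos)
    obtain ⟨xh, ph, hd1, _, hxh, hph⟩ := hnear η' hη'pos
    have hD0lt : Metric.infDist (p (k-1)) Pstar < D0 + η' := by
      rw [← hD0def]; linarith
    obtain ⟨pbar, hpbar, hdbar⟩ := (Metric.infDist_lt_iff hPne).1 hD0lt
    obtain ⟨lamB, muB, hpeq, hmuB, hoptB⟩ := hpbar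
    subst hpeq
    have hmemB : mkDual lamB muB ∈ Pstar := ⟨lamB, muB, rfl, hmuB, hoptB⟩
    have hsdB : saddleSubdiff f h g xh lamB muB 0 0 0 :=
      opt_is_saddle ⟨s0, hSmem⟩ hxh hmuB hoptB
    have hmono2 : 0 ≤ ⟪x k - xh, y k⟫ + ⟪p k - mkDual lamB muB, U k⟫ := by
      have h9 := saddle_mono (fun i => hmu_nn k i) hmuB (hsd k hk1) hsdB
      have hcomm : ⟪x k - xh, y k⟫ = ⟪y k, x k - xh⟫ := real_inner_comm _ _
      have hsplit : ⟪p k - mkDual lamB muB, U k⟫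
          = ⟪-(h (x k)), lam k - lamB⟫ + ⟪uμ k, mu k - muB⟫ := by
        rw [real_inner_comm]
        exact hinnerU k (mkDual lamB muB)
      linarith [h9, hcomm, hsplit]
    have hexp : ‖p (k-1) - mkDual lamB muB‖^2 = ‖p k - mkDual lamB muB‖^2
        + 2 * (c k * ⟪p k - mkDual lamB muB, U k⟫) + (c k)^2 * ‖U k‖^2 := by
      have hpp : p (k-1) - mkDual lamB muB = (p k - mkDual lamB muB) + c k • U k := by
        rw [hpU k hk1]; abel
      rw [hpp, norm_add_sq_real, real_inner_smul_right, norm_smul]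
      simp [mul_pow, sq_abs]
    have hyk : ‖y k‖ ≤ Real.sqrt σ * ‖U k‖ := by
      have h1 : ‖y k‖^2 ≤ σ * ‖U k‖^2 := hy_sq k hk1
      calc ‖y k‖ = Real.sqrt (‖y k‖^2) := (Real.sqrt_sq (norm_nonneg _)).symm
        _ ≤ Real.sqrt (σ * ‖U k‖^2) := Real.sqrt_le_sqrt h1
        _ = Real.sqrt σ * ‖U k‖ := by rw [Real.sqrt_mul hσ0, Real.sqrt_sq htk0]
    have e1 : ⟪x k - xh, y k⟫ ≤ (κ * rk + η') * (Real.sqrt σ * ‖U k‖) := by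
      have hcs := real_inner_le_norm (x k - xh) (y k)
      have hxd : ‖x k - xh‖ ≤ κ * rk + η' := by rw [← dist_eq_norm]; exact hd1
      exact le_trans hcs (mul_le_mul hxd hyk (norm_nonneg _) (by positivity))
    have e2 : -⟪p k - mkDual lamB muB, U k⟫ ≤ (κ * rk + η') * (Real.sqrt σ * ‖U k‖) := by
      linarith [hmono2, e1]
    have hDle : Metric.infDist (p k) Pstar ≤ ‖p k - mkDual lamB muB‖ := by
      rw [← dist_eq_norm]
      exact Metric.infDist_le_dist_of_mem hmemB
    have hDsq : (Metric.infDist (p k) Pstar)^2 ≤ ‖p k - mkDual lamB muB‖^2 :=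
      pow_le_pow_left₀ Metric.infDist_nonneg hDle 2
    have hdbar' : ‖p (k-1) - mkDual lamB muB‖ ≤ D0 + η' := by
      rw [← dist_eq_norm]; exact hdbar.le
    have hdbar_sq : ‖p (k-1) - mkDual lamB muB‖^2 ≤ (D0 + η')^2 :=
      pow_le_pow_left₀ (norm_nonneg _) hdbar' 2
    have e3 : ‖p k - mkDual lamB muB‖^2 ≤ (D0 + η')^2 - (c k)^2 * ‖U k‖^2
        + 2 * (c k) * ((κ * rk + η') * (Real.sqrt σ * ‖U k‖)) := by
      have h5 := mul_le_mul_of_nonneg_left e2 (by positivity : (0:ℝ) ≤ 2 * c k)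
      linarith [hexp, hdbar_sq, h5]
    have e4 : κ * rk ≤ κ * (Real.sqrt (1+σ) * ‖U k‖) :=
      mul_le_mul_of_nonneg_left hrk_le hκ.le
    have e5 : (κ * rk + η') * (Real.sqrt σ * ‖U k‖)
        ≤ κ * (σ + Real.sqrt σ) * ‖U k‖^2 + η' * (Real.sqrt σ * ‖U k‖) := by
      have q1 : κ * rk * (Real.sqrt σ * ‖U k‖)
          ≤ (κ * (Real.sqrt (1+σ) * ‖U k‖)) * (Real.sqrt σ * ‖U k‖) :=
        mul_le_mul_of_nonneg_right e4 (by positivity)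
      have q2 : (κ * (Real.sqrt (1+σ) * ‖U k‖)) * (Real.sqrt σ * ‖U k‖)
          = (Real.sqrt σ * (κ * Real.sqrt (1+σ))) * ‖U k‖^2 := by ring
      have q3 : (Real.sqrt σ * (κ * Real.sqrt (1+σ))) * ‖U k‖^2
          ≤ (κ * (σ + Real.sqrt σ)) * ‖U k‖^2 :=
        mul_le_mul_of_nonneg_right (sqrt_mul_sqrt_le hσ0 hκ.le) (sq_nonneg _)
      linarith [q1, q2, q3]
    have e6 := mul_le_mul_of_nonneg_left e5 (by positivity : (0:ℝ) ≤ 2 * c k)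
    have hη'sq : η'^2 ≤ η' := by nlinarith [hη'pos, hη'1]
    have hcost : 2*D0*η' + η'^2 + 2 * c k * (η' * (Real.sqrt σ * ‖U k‖)) ≤ η' * M := by
      rw [hMdef]
      linarith [hη'sq]
    have goal1 : (Metric.infDist (p k) Pstar)^2
        ≤ D0^2 - ((c k)^2 - 2*κ*(σ + Real.sqrt σ)*(c k)) * ‖U k‖^2 + η' * M := by
      have hsqexp : (D0 + η')^2 = D0^2 + 2*D0*η' + η'^2 := by ring
      linarith [hDsq, e3, e6, hcost, hsqexp]
    linarith [goal1, hη'M]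
  -- final algebra
  have hβck : 0 < (c k)^2 - 2*κ*(σ + Real.sqrt σ)*(c k) := by
    have h2 : 0 < c k - 2*κ*(σ + Real.sqrt σ) := by linarith [hck_large]
    nlinarith [mul_pos hck h2]
  have hgoalk : mkDual (lam k) (mu k) = p k := rfl
  have hgoalk1 : mkDual (lam (k-1)) (mu (k-1)) = p (k-1) := rfl
  rw [hgoalk, hgoalk1]
  set γ := (c k)^2 - 2*κ*(σ + Real.sqrt σ)*(c k) with hγdef
  set a0 := κ * Real.sqrt (1+σ) with ha0def
  have hden : 0 < γ + κ^2*(1+σ) := by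
    have h3 : 0 < κ^2*(1+σ) := by positivity
    linarith [hβck]
  have ha0pos : 0 < a0 := mul_pos hκ hsqrt1σ
  have ha0sq : a0^2 = κ^2 * (1+σ) := by
    rw [ha0def, mul_pow, Real.sq_sqrt (by linarith : (0:ℝ) ≤ 1+σ)]
  have hD1sq : (Metric.infDist (p k) Pstar)^2 ≤ a0^2 * ‖U k‖^2 := by
    have h1 := pow_le_pow_left₀ Metric.infDist_nonneg hD1 2
    calc (Metric.infDist (p k) Pstar)^2 ≤ (κ * (Real.sqrt (1+σ) * ‖U k‖))^2 := h1
      _ = a0^2 * ‖U k‖^2 := by rw [ha0def]; ring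
  have hkey : (Metric.infDist (p k) Pstar)^2 * (γ + a0^2)
      ≤ a0^2 * (Metric.infDist (p (k-1)) Pstar)^2 := by
    have q1 : γ * (Metric.infDist (p k) Pstar)^2 ≤ γ * (a0^2 * ‖U k‖^2) :=
      mul_le_mul_of_nonneg_left hD1sq hβck.le
    have q2 : a0^2 * (Metric.infDist (p k) Pstar)^2
        ≤ a0^2 * ((Metric.infDist (p (k-1)) Pstar)^2 - γ * ‖U k‖^2) :=
      mul_le_mul_of_nonneg_left (by linarith [hD2]) (sq_nonneg a0)
    linarith [q1, q2]
  have hfinal_sq : (Metric.infDist (p k) Pstar)^2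
      ≤ (a0 / Real.sqrt (γ + κ^2*(1+σ)) * (Metric.infDist (p (k-1)) Pstar))^2 := by
    have hd2 : Real.sqrt (γ + κ^2*(1+σ))^2 = γ + κ^2*(1+σ) := Real.sq_sqrt hden.le
    rw [mul_pow, div_pow, hd2, div_mul_eq_mul_div, le_div_iff₀ hden]
    calc (Metric.infDist (p k) Pstar)^2 * (γ + κ^2*(1+σ))
        = (Metric.infDist (p k) Pstar)^2 * (γ + a0^2) := by rw [ha0sq]
      _ ≤ a0^2 * (Metric.infDist (p (k-1)) Pstar)^2 := hkey
  have hrhs_nonneg : 0 ≤ a0 / Real.sqrt (γ + κ^2*(1+σ)) * Metric.infDist (p (k-1)) Pstar := by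
    have := Metric.infDist_nonneg (s := Pstar) (x := p (k-1))
    positivity
  calc Metric.infDist (p k) Pstar
      = Real.sqrt ((Metric.infDist (p k) Pstar)^2) :=
        (Real.sqrt_sq Metric.infDist_nonneg).symm
    _ ≤ Real.sqrt ((a0 / Real.sqrt (γ + κ^2*(1+σ)) * Metric.infDist (p (k-1)) Pstar)^2) :=
        Real.sqrt_le_sqrt hfinal_sq
    _ = a0 / Real.sqrt (γ + κ^2*(1+σ)) * Metric.infDist (p (k-1)) Pstar :=
        Real.sqrt_sq hrhs_nonneg
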